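/- Let P^{(n,N)} be the n × N 0-1 matrix (with n ≤ N) defined by P_{i,j} = 0 iff i + j ≤ ⌊n/2⌋ + 1 or i + j ≥ ⌊n/2⌋ + N + 1 (1-based indices). Then the maximum length of a 0-staircase in P^{(n,N)} is ⌈n/2⌉ and the maximum length of a 1-staircase in P^{(n,N)} is N − 1. -/

import Mathlib

/-- A step of a staircase: the next position is strictly to the right in the
same row, or strictly below in the same column. -/
def Step {n N : ℕ} (p q : Fin n × Fin N) : Prop :=
  (p.1 = q.1 ∧ p.2 < q.2) ∨ (p.2 = q.2 ∧ p.1 < q.1)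

/-- A `v`-staircase in the 0-1 matrix `M`: a sequence of positions all holding
the value `v`, each successive one strictly to the right in the same row or
strictly below in the same column of the previous one. -/
def IsStaircase {n N : ℕ} (M : Fin n → Fin N → Fin 2) (v : Fin 2)
    (L : List (Fin n × Fin N)) : Prop :=
  (∀ p ∈ L, M p.1 p.2 = v) ∧ L.Chain' Step

/-- The matrix P^(n,N): entry 0 iff i + j ≤ ⌊n/2⌋ + 1 or i + j ≥ ⌊n/2⌋ + N + 1
(1-based indices). -/
def Pmat (n N : ℕ) : Fin n → Fin N → Fin 2 := fun i j =>
  if (i.1 + 1) + (j.1 + 1) ≤ n / 2 + 1 ∨ n / 2 + N + 1 ≤ (i.1 + 1) + (j.1 + 1)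
  then 0 else 1

lemma chain'_mono_mem {α : Type*} {R S : α → α → Prop} :
    ∀ {L : List α}, (∀ a ∈ L, ∀ b ∈ L, R a b → S a b) → L.Chain' R → L.Chain' S := by
  intro L
  induction L with
  | nil => intro _ _; exact List.IsChain.nil
  | cons a l ih =>
    intro hm hc
    simp only [List.Chain', List.isChain_cons] at hc ⊢
    refine ⟨fun b hb => hm a (by simp) b (by simp [List.mem_of_mem_head? hb]) (hc.1 b hb), ?_⟩
    exact ih (fun x hx y hy => hm x (by simp [hx]) y (by simp [hy])) hc.2

lemma length_le_of_chain_lt {α : Type*} (L : List α) (g : α → ℕ) (b : ℕ)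
    (hc : L.Chain' (fun p q => g p < g q)) (hb : ∀ p ∈ L, g p < b) : L.length ≤ b := by
  have h1 : (L.map g).Chain' (· < ·) := (List.isChain_map g).mpr hc
  have h2 : (L.map g).Pairwise (· < ·) := List.isChain_iff_pairwise.mp h1
  have hnd : (L.map g).Nodup := h2.imp Nat.ne_of_lt
  have hsub : (L.map g).toFinset ⊆ Finset.range b := by
    intro x hx
    rw [List.mem_toFinset, List.mem_map] at hx
    obtain ⟨p, hp, rfl⟩ := hx
    exact Finset.mem_range.mpr (hb p hp)
  have := Finset.card_le_card hsub
  rw [List.toFinset_card_of_nodup hnd, Finset.card_range, List.length_map] at this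
  exact this

lemma Pmat_eq_zero_iff {n N : ℕ} (i : Fin n) (j : Fin N) :
    Pmat n N i j = 0 ↔
      (i.1 + 1) + (j.1 + 1) ≤ n / 2 + 1 ∨ n / 2 + N + 1 ≤ (i.1 + 1) + (j.1 + 1) := by
  unfold Pmat
  split <;> simp_all

lemma Pmat_eq_one_iff {n N : ℕ} (i : Fin n) (j : Fin N) :
    Pmat n N i j = 1 ↔
      ¬((i.1 + 1) + (j.1 + 1) ≤ n / 2 + 1 ∨ n / 2 + N + 1 ≤ (i.1 + 1) + (j.1 + 1)) := by
  unfold Pmat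
  split <;> simp_all


/-- In P^(n,N) (1 ≤ n ≤ N), the maximum length of a 0-staircase is ⌈n/2⌉ and
the maximum length of a 1-staircase is N − 1. -/
theorem stmt4 (n N : ℕ) (hn : 1 ≤ n) (hnN : n ≤ N) :
    IsGreatest {l : ℕ | ∃ L, IsStaircase (Pmat n N) 0 L ∧ L.length = l} ((n + 1) / 2) ∧
    IsGreatest {l : ℕ | ∃ L, IsStaircase (Pmat n N) 1 L ∧ L.length = l} (N - 1) := by
  have hN : 1 ≤ N := hn.trans hnN
  constructor
  · constructor
    · -- membership: column N-1, rows n/2 .. n-1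
      refine ⟨(List.finRange ((n + 1) / 2)).map
        (fun k => (⟨n / 2 + k.1, by have := k.isLt; omega⟩, ⟨N - 1, by omega⟩)), ⟨?_, ?_⟩, ?_⟩
      · intro p hp
        rw [List.mem_map] at hp
        obtain ⟨k, _, rfl⟩ := hp
        rw [Pmat_eq_zero_iff]
        right; simp; omega
      · apply List.Pairwise.isChain
        rw [List.pairwise_map]
        refine (List.pairwise_lt_finRange _).imp ?_
        intro a b hab
        right
        exact ⟨rfl, Fin.mk_lt_mk.mpr (Nat.add_lt_add_left (Fin.lt_def.mp hab) _)⟩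
      · simp
    · -- upper bound for 0-staircases
      rintro l ⟨L, ⟨hval, hch⟩, rfl⟩
      apply length_le_of_chain_lt L
        (fun p => if p.1.1 + p.2.1 < n / 2 then p.1.1 + p.2.1
                  else p.1.1 + p.2.1 - (n / 2 + N - 1))
      · refine chain'_mono_mem ?_ hch
        intro p hp q hq hstep
        have zp := (Pmat_eq_zero_iff p.1 p.2).mp (hval p hp)
        have zq := (Pmat_eq_zero_iff q.1 q.2).mp (hval q hq)
        have b1 := p.1.isLt; have b2 := p.2.isLt
        have b3 := q.1.isLt; have b4 := q.2.isLt
        rcases hstep with ⟨he, hl⟩ | ⟨he, hl⟩ <;>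
          [ (have he' : p.1.1 = q.1.1 := congrArg Fin.val he);
            (have he' : p.2.1 = q.2.1 := congrArg Fin.val he)] <;>
          (have hl' := (Fin.lt_def).mp hl) <;>
          split_ifs <;> omega
      · intro p hp
        have zp := (Pmat_eq_zero_iff p.1 p.2).mp (hval p hp)
        have b1 := p.1.isLt; have b2 := p.2.isLt
        split_ifs <;> omega
  · constructor
    · -- membership: row n/2, columns 0 .. N-2
      refine ⟨(List.finRange (N - 1)).map
        (fun j => (⟨n / 2, by omega⟩, ⟨j.1, by have := j.isLt; omega⟩)), ⟨?_, ?_⟩, ?_⟩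
      · intro p hp
        rw [List.mem_map] at hp
        obtain ⟨j, _, rfl⟩ := hp
        have := j.isLt
        rw [Pmat_eq_one_iff]
        push_neg
        constructor <;> simp <;> omega
      · apply List.Pairwise.isChain
        rw [List.pairwise_map]
        refine (List.pairwise_lt_finRange _).imp ?_
        intro a b hab
        left
        exact ⟨rfl, Fin.mk_lt_mk.mpr (Fin.lt_def.mp hab)⟩
      · simp
    · -- upper bound for 1-staircases
      rintro l ⟨L, ⟨hval, hch⟩, rfl⟩
      apply length_le_of_chain_lt L (fun p => p.1.1 + p.2.1 - n / 2)
      · refine chain'_mono_mem ?_ hch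
        intro p hp q hq hstep
        have zp := (Pmat_eq_one_iff p.1 p.2).mp (hval p hp)
        have zq := (Pmat_eq_one_iff q.1 q.2).mp (hval q hq)
        push_neg at zp zq
        rcases hstep with ⟨he, hl⟩ | ⟨he, hl⟩ <;>
          [ (have he' : p.1.1 = q.1.1 := congrArg Fin.val he);
            (have he' : p.2.1 = q.2.1 := congrArg Fin.val he)] <;>
          (have hl' := (Fin.lt_def).mp hl) <;> omega
      · intro p hp
        have zp := (Pmat_eq_one_iff p.1 p.2).mp (hval p hp)
        push_neg at zp
        omega
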